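/- Let L be a complex on which a group Sym(L) acts transitively on top faces, let i, j be colors with the bipartite graph (L_i(1), L_j(1)) having diameter at most ℓ, and suppose an iterative shortest-path algorithm constructs paths of length at most ℓ between pairs (u,v) ∈ L_i(1) × L_j(1), deleting any edge used in at least t = Θ(|L_i(1)||L_j(1)| / (ε³|L_{ij}(2)|)) paths. Then the total number of deleted edges is at most |L_i(1)||L_j(1)|·ℓ/t = Θ(ε²·|L_{ij}(2)|), and by transitivity of the symmetric action the algorithm outputs valid paths (length ≤ ℓ, no deleted edge) for at least a 1 − O(ε) fraction of pairs (u,v). -/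

import Mathlib

open Finset
open scoped Classical

set_option linter.unusedSectionVars false
set_option maxHeartbeats 1000000

section Aux

variable {W : Type} [Fintype W] [DecidableEq W] {G : SimpleGraph W}

/-- Graph hom from an adjacency-preserving permutation. -/
def adjHom (g : Equiv.Perm W) (h : ∀ u v, G.Adj u v → G.Adj (g u) (g v)) : G →g G :=
  ⟨⇑g, fun {a b} hab => h a b hab⟩

@[simp] lemma adjHom_apply (g : Equiv.Perm W) (h : ∀ u v, G.Adj u v → G.Adj (g u) (g v))
    (x : W) : adjHom (G := G) g h x = g x := rfl

/-- Shift a walk by an adjacency preserving permutation. -/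
def shiftWalk (g : Equiv.Perm W) (h : ∀ u v, G.Adj u v → G.Adj (g u) (g v))
    {u v : W} (w : G.Walk (g⁻¹ u) (g⁻¹ v)) : G.Walk u v :=
  (w.map (adjHom g h)).copy (by simp) (by simp)

@[simp] lemma shiftWalk_length (g : Equiv.Perm W) (h : ∀ u v, G.Adj u v → G.Adj (g u) (g v))
    {u v : W} (w : G.Walk (g⁻¹ u) (g⁻¹ v)) : (shiftWalk g h w).length = w.length := by
  exact (SimpleGraph.Walk.length_copy ..).trans (SimpleGraph.Walk.length_map ..)

@[simp] lemma shiftWalk_edges (g : Equiv.Perm W) (h : ∀ u v, G.Adj u v → G.Adj (g u) (g v))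
    {u v : W} (w : G.Walk (g⁻¹ u) (g⁻¹ v)) :
    (shiftWalk g h w).edges = w.edges.map (Sym2.map ⇑g) := by
  exact (SimpleGraph.Walk.edges_copy ..).trans (SimpleGraph.Walk.edges_map ..)

@[simp] lemma sym2_map_inv_map (g : Equiv.Perm W) (e : Sym2 W) :
    Sym2.map ⇑g⁻¹ (Sym2.map ⇑g e) = e := by
  have h : (⇑g⁻¹ ∘ ⇑g) = id := by funext x; simp
  rw [Sym2.map_map, h, Sym2.map_id, id]

@[simp] lemma sym2_map_map_inv (g : Equiv.Perm W) (e : Sym2 W) :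
    Sym2.map ⇑g (Sym2.map ⇑g⁻¹ e) = e := by
  have := sym2_map_inv_map g⁻¹ e
  simpa using this

lemma mem_map_sym2_iff (g : Equiv.Perm W) (e : Sym2 W) (l : List (Sym2 W)) :
    e ∈ l.map (Sym2.map ⇑g) ↔ Sym2.map ⇑g⁻¹ e ∈ l := by
  constructor
  · intro h
    rcases List.mem_map.mp h with ⟨f, hf, rfl⟩
    rw [sym2_map_inv_map]; exact hf
  · intro h
    exact List.mem_map.mpr ⟨Sym2.map ⇑g⁻¹ e, h, sym2_map_map_inv g e⟩

/-- The (optional) walk assigned to `(u,v)` by the shift `a`. -/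
noncomputable def oneWalk (Gp : Subgroup (Equiv.Perm W))
    (hadj : ∀ g ∈ Gp, ∀ u v, G.Adj u v → G.Adj (g u) (g v))
    (B : ∀ u v : W, Option (G.Walk u v)) (a : Equiv.Perm W) (u v : W) :
    Option (G.Walk u v) :=
  if h : a ∈ Gp then (B (a⁻¹ u) (a⁻¹ v)).map (fun w => shiftWalk a (hadj a h) w)
  else none

/-- Edge list of an optional walk. -/
def wEdges {u v : W} (o : Option (G.Walk u v)) : List (Sym2 W) :=
  o.elim [] SimpleGraph.Walk.edges

@[simp] lemma wEdges_some {u v : W} (w : G.Walk u v) : wEdges (some w) = w.edges := rfl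
@[simp] lemma wEdges_none {u v : W} : wEdges (none : Option (G.Walk u v)) = [] := rfl

lemma mem_wEdges_oneWalk (Gp : Subgroup (Equiv.Perm W))
    (hadj : ∀ g ∈ Gp, ∀ u v, G.Adj u v → G.Adj (g u) (g v))
    (B : ∀ u v : W, Option (G.Walk u v)) {a : Equiv.Perm W} (ha : a ∈ Gp) (u v : W)
    (e : Sym2 W) :
    e ∈ wEdges (oneWalk Gp hadj B a u v) ↔ Sym2.map ⇑a⁻¹ e ∈ wEdges (B (a⁻¹ u) (a⁻¹ v)) := by
  unfold oneWalk
  rw [dif_pos ha]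
  cases B (a⁻¹ u) (a⁻¹ v) with
  | none => simp
  | some w => simp only [Option.map_some, wEdges_some, shiftWalk_edges, mem_map_sym2_iff]

lemma wEdges_mem_edgeSet {u v : W} (o : Option (G.Walk u v)) (e : Sym2 W)
    (he : e ∈ wEdges o) : e ∈ G.edgeSet := by
  cases o with
  | none => simp at he
  | some w => exact w.edges_subset_edgeSet he

/-- The final path family: keep the assigned walk only if it is short and avoids `Eb`. -/
noncomputable def finalP (A : ∀ u v : W, Option (G.Walk u v)) (ℓ : ℕ) (Eb : Finset (Sym2 W))
    (u v : W) : Option (G.Walk u v) :=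
  match A u v with
  | none => none
  | some w => if w.length ≤ ℓ ∧ ∀ e ∈ w.edges, e ∉ Eb then some w else none

lemma finalP_eq_some {A : ∀ u v : W, Option (G.Walk u v)} {ℓ : ℕ} {Eb : Finset (Sym2 W)}
    {u v : W} {w : G.Walk u v} (h : finalP A ℓ Eb u v = some w) :
    A u v = some w ∧ w.length ≤ ℓ ∧ ∀ e ∈ w.edges, e ∉ Eb := by
  unfold finalP at h
  rcases hA : A u v with _ | w'
  · rw [hA] at h; cases h
  · rw [hA] at h
    dsimp at h
    split_ifs at h with hc
    · cases h; exact ⟨rfl, hc⟩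

lemma finalP_eq_none_iff {A : ∀ u v : W, Option (G.Walk u v)} {ℓ : ℕ} {Eb : Finset (Sym2 W)}
    {u v : W} {w : G.Walk u v} (hA : A u v = some w) (hl : w.length ≤ ℓ) :
    (finalP A ℓ Eb u v = none ↔ ∃ e ∈ w.edges, e ∈ Eb) := by
  unfold finalP
  rw [hA]
  dsimp
  split_ifs with hc
  · simp only [reduceCtorEq, false_iff]
    rintro ⟨e, he, hb⟩
    exact hc.2 e he hb
  · simp only [true_iff]
    push_neg at hc
    rcases hc hl with ⟨e, he, hb⟩
    exact ⟨e, he, hb⟩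

/-- Independence over a product probability space. -/
lemma sum_pi_mul {ι α : Type} [Fintype ι] [DecidableEq ι] [DecidableEq α]
    (Γ : Finset α) {p q : ι} (hpq : p ≠ q) (F H : α → ℕ) :
    ∑ ω ∈ Fintype.piFinset (fun _ : ι => Γ), F (ω p) * H (ω q)
      = Γ.card ^ (Fintype.card ι - 2) * ((∑ a ∈ Γ, F a) * (∑ b ∈ Γ, H b)) := by
  classical
  set f : ι → α → ℕ := fun i x => if i = p then F x else if i = q then H x else 1 with hf
  have key := Finset.prod_univ_sum (fun _ : ι => Γ) f
  have hsub : ({p, q} : Finset ι) ⊆ univ := subset_univ _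
  have hprodpair : ∀ (g : ι → ℕ), ∏ i ∈ ({p, q} : Finset ι), g i = g p * g q := by
    intro g; exact Finset.prod_pair hpq
  have hcard : (univ \ ({p, q} : Finset ι)).card = Fintype.card ι - 2 := by
    rw [Finset.card_sdiff_of_subset hsub, Finset.card_pair hpq, Finset.card_univ]
  have h1 : ∀ ω : ι → α, (∏ i, f i (ω i)) = F (ω p) * H (ω q) := by
    intro ω
    rw [← Finset.prod_sdiff hsub, hprodpair (fun i => f i (ω i))]
    have h2 : ∏ i ∈ univ \ ({p, q} : Finset ι), f i (ω i) = 1 := by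
      apply Finset.prod_eq_one
      intro i hi
      rcases Finset.mem_sdiff.mp hi with ⟨_, hnot⟩
      simp only [Finset.mem_insert, Finset.mem_singleton] at hnot
      push_neg at hnot
      simp [hf, hnot.1, hnot.2]
    rw [h2, one_mul]
    simp [hf, Ne.symm hpq]
  have h3 : (∏ i, ∑ x ∈ Γ, f i x)
      = Γ.card ^ (Fintype.card ι - 2) * ((∑ a ∈ Γ, F a) * (∑ b ∈ Γ, H b)) := by
    rw [← Finset.prod_sdiff hsub, hprodpair (fun i => ∑ x ∈ Γ, f i x)]
    have h2 : ∏ i ∈ univ \ ({p, q} : Finset ι), (∑ x ∈ Γ, f i x)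
        = Γ.card ^ (Fintype.card ι - 2) := by
      rw [← hcard]
      apply Finset.prod_eq_pow_card
      intro i hi
      rcases Finset.mem_sdiff.mp hi with ⟨_, hnot⟩
      simp only [Finset.mem_insert, Finset.mem_singleton] at hnot
      push_neg at hnot
      simp [hf, hnot.1, hnot.2]
    rw [h2]
    simp [hf, Ne.symm hpq]
  rw [key] at h3
  rw [← h3]
  apply Finset.sum_congr rfl
  intro ω _
  exact (h1 ω).symm

end Aux

/-- **low-congestion short paths inside a link.**
There is a universal constant `C` such that the following holds.  Let `G` be the
bipartite graph between the colour classes `SA = L_i(1)` and `SB = L_j(1)` of a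
link `L` on which a symmetry group `Gp` acts transitively on top faces — hence
by colour-preserving graph automorphisms acting transitively on the edges
(`hedgetrans`) — and suppose every pair `(u, v) ∈ SA × SB` is joined by a path
of length at most `ℓ` (`hdiam`), where `ℓ = Θ(1/ε)` (`hℓε : ℓ·ε ≤ 1`).  Let
`t = Θ(|SA|·|SB|/(ε³·|E|))`, concretely large enough that
`|SA|·|SB|·ℓ ≤ ε²·t·|E|` (`ht`).  Then the iterative shortest-path algorithm —
which repeatedly picks a shortest surviving path between pairs and deletes any
edge used at least `t` times — produces a set `Ebad` of deleted edges with
`|Ebad| ≤ |SA|·|SB|·ℓ/t` (`= Θ(ε²·|E|)`) and a family of paths `P u v` such that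
every valid path has length at most `ℓ` and avoids `Ebad`, every edge is used
in at most `t` paths, and at most a `C·ε`-fraction of the pairs `(u, v)` get an
invalid path. -/
theorem link_path_construction :
    ∃ C : ℝ, 0 < C ∧
    ∀ (W : Type) (_ : Fintype W) (_ : DecidableEq W)
      (G : SimpleGraph W) (_ : DecidableRel G.Adj)
      (SA SB : Finset W) (ℓ t : ℕ) (ε : ℝ)
      (Gp : Subgroup (Equiv.Perm W)),
      0 < ε → 0 < t →
      SA.Nonempty → SB.Nonempty → Disjoint SA SB →
      (∀ u v, G.Adj u v → (u ∈ SA ∧ v ∈ SB) ∨ (u ∈ SB ∧ v ∈ SA)) →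
      (∀ u ∈ SA, ∀ v ∈ SB, ∃ wlk : G.Walk u v, wlk.length ≤ ℓ) →
      (∀ g ∈ Gp, ∀ u v, G.Adj u v ↔ G.Adj (g u) (g v)) →
      (∀ g ∈ Gp, ∀ u, u ∈ SA ↔ g u ∈ SA) →
      (∀ g ∈ Gp, ∀ u, u ∈ SB ↔ g u ∈ SB) →
      (∀ e ∈ G.edgeFinset, ∀ e' ∈ G.edgeFinset,
        ∃ g ∈ Gp, Sym2.map (⇑g) e = e') →
      ((SA.card : ℝ) * SB.card * ℓ ≤ ε ^ 2 * t * G.edgeFinset.card) →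
      ((ℓ : ℝ) * ε ≤ 1) →
      ∃ Ebad : Finset (Sym2 W), Ebad ⊆ G.edgeFinset ∧
        ((Ebad.card : ℝ) ≤ (SA.card : ℝ) * SB.card * ℓ / t) ∧
        ∃ P : (u v : W) → Option (G.Walk u v),
          (∀ u ∈ SA, ∀ v ∈ SB, ∀ wlk : G.Walk u v, P u v = some wlk →
            wlk.length ≤ ℓ ∧ ∀ e ∈ wlk.edges, e ∉ Ebad) ∧
          (∀ e : Sym2 W,
            (((SA ×ˢ SB).filter (fun uv =>
                ∃ wlk : G.Walk uv.1 uv.2, P uv.1 uv.2 = some wlk ∧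
                  e ∈ wlk.edges)).card : ℝ) ≤ t) ∧
          ((((SA ×ˢ SB).filter (fun uv => P uv.1 uv.2 = none)).card : ℝ) ≤
            C * ε * ((SA.card : ℝ) * SB.card)) := by
  refine ⟨1, one_pos, ?_⟩
  intro W _ _ G _ SA SB ℓ t ε Gp hε ht0 hSAne hSBne hdisj hbip hdiam hadj hSA hSB hedgetrans ht hℓε
  classical
  have hadj' : ∀ g ∈ Gp, ∀ u v, G.Adj u v → G.Adj (g u) (g v) :=
    fun g hg u v h => (hadj g hg u v).mp h
  -- base walks
  have hBex : ∀ u v : W, ∃ o : Option (G.Walk u v),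
      u ∈ SA → v ∈ SB → ∃ w, o = some w ∧ w.length ≤ ℓ := by
    intro u v
    by_cases h : u ∈ SA ∧ v ∈ SB
    · obtain ⟨w, hw⟩ := hdiam u h.1 v h.2
      exact ⟨some w, fun _ _ => ⟨w, rfl, hw⟩⟩
    · exact ⟨none, fun h1 h2 => absurd ⟨h1, h2⟩ h⟩
  choose B hB using hBex
  set E := G.edgeFinset with hE
  set m := E.card with hm
  set Pairs := SA ×ˢ SB with hPairs
  set Pc := Pairs.card with hPc
  have hPcc : Pc = SA.card * SB.card := Finset.card_product _ _
  -- the graph has an edge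
  obtain ⟨u₀, hu₀⟩ := hSAne
  obtain ⟨v₀, hv₀⟩ := hSBne
  have huv₀ : u₀ ≠ v₀ := fun h => (Finset.disjoint_left.mp hdisj hu₀) (h ▸ hv₀)
  have hmpos : 0 < m := by
    obtain ⟨w, -⟩ := hdiam u₀ hu₀ v₀ hv₀
    cases w with
    | nil => exact absurd rfl huv₀
    | cons h p =>
      rw [hm, hE]
      exact Finset.card_pos.mpr ⟨_, SimpleGraph.mem_edgeFinset.mpr ((G.mem_edgeSet).mpr h)⟩
  have hWcard : 2 ≤ Fintype.card W := Fintype.one_lt_card_iff.mpr ⟨u₀, v₀, huv₀⟩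
  set Γ : Finset (Equiv.Perm W) := univ.filter (· ∈ Gp) with hΓ
  have hΓmem : ∀ a : Equiv.Perm W, a ∈ Γ ↔ a ∈ Gp := by intro a; simp [hΓ]
  set Ω := Fintype.piFinset (fun _ : W × W => Γ) with hΩ
  set n := Fintype.card (W × W) with hn
  have hn2 : 2 ≤ n := by
    rw [hn, Fintype.card_prod]
    nlinarith
  have hΩcard : Ω.card = Γ.card ^ n := by
    rw [hΩ, Fintype.card_piFinset]
    simp [hn]
  have hΩne : Ω.Nonempty :=
    ⟨fun _ => 1, by simp [hΩ, Fintype.mem_piFinset, hΓmem, one_mem]⟩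
  -- edge lists
  set eL : Equiv.Perm W → (W × W) → List (Sym2 W) :=
    fun a p => wEdges (oneWalk Gp hadj' B a p.1 p.2) with heL
  set bL : (W × W) → List (Sym2 W) := fun p => wEdges (B p.1 p.2) with hbL
  set usage : Sym2 W → ℕ := fun f => (Pairs.filter (fun p => f ∈ bL p)).card with husage
  set T := ∑ f ∈ E, usage f with hT
  set μ : (W × W) → Sym2 W → ℕ :=
    fun p e => ∑ a ∈ Γ, (if e ∈ eL a p then 1 else 0) with hμ
  set ν : Sym2 W → ℕ := fun e => ∑ a ∈ Γ, usage (Sym2.map ⇑a⁻¹ e) with hν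
  -- basic facts
  have F_mem : ∀ a p e, e ∈ eL a p → e ∈ E := by
    intro a p e he
    rw [hE, SimpleGraph.mem_edgeFinset]
    exact wEdges_mem_edgeSet _ e he
  have F_memb : ∀ p e, e ∈ bL p → e ∈ E := by
    intro p e he
    rw [hE, SimpleGraph.mem_edgeFinset]
    exact wEdges_mem_edgeSet _ e he
  have F_pairs_inv : ∀ a ∈ Gp, ∀ p : W × W, p ∈ Pairs ↔ (a⁻¹ p.1, a⁻¹ p.2) ∈ Pairs := by
    intro a ha p
    simp only [hPairs, Finset.mem_product]
    exact and_congr (hSA a⁻¹ (inv_mem ha) p.1) (hSB a⁻¹ (inv_mem ha) p.2)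
  have F_one : ∀ a ∈ Gp, ∀ p ∈ Pairs,
      ∃ w : G.Walk p.1 p.2, oneWalk Gp hadj' B a p.1 p.2 = some w ∧ w.length ≤ ℓ := by
    intro a ha p hp
    have hp' := (F_pairs_inv a ha p).mp hp
    rw [hPairs, Finset.mem_product] at hp'
    obtain ⟨w₀, hw₀, hl₀⟩ := hB (a⁻¹ p.1) (a⁻¹ p.2) hp'.1 hp'.2
    refine ⟨shiftWalk a (hadj' a ha) w₀, ?_, by simpa using hl₀⟩
    unfold oneWalk
    rw [dif_pos ha, hw₀]
    rfl
  have F_len : ∀ a ∈ Gp, ∀ p ∈ Pairs, (eL a p).length ≤ ℓ := by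
    intro a ha p hp
    obtain ⟨w, hw, hl⟩ := F_one a ha p hp
    rw [heL]
    simp only [hw, wEdges_some]
    rw [SimpleGraph.Walk.length_edges]
    exact hl
  have F_blen : ∀ p ∈ Pairs, (bL p).length ≤ ℓ := by
    intro p hp
    rw [hPairs, Finset.mem_product] at hp
    obtain ⟨w₀, hw₀, hl₀⟩ := hB p.1 p.2 hp.1 hp.2
    rw [hbL]
    simp only [hw₀, wEdges_some]
    rw [SimpleGraph.Walk.length_edges]
    exact hl₀
  have F_eL_iff : ∀ a ∈ Gp, ∀ p : W × W, ∀ e,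
      (e ∈ eL a p ↔ Sym2.map ⇑a⁻¹ e ∈ bL (a⁻¹ p.1, a⁻¹ p.2)) := by
    intro a ha p e
    exact mem_wEdges_oneWalk Gp hadj' B ha p.1 p.2 e
  have F_count : ∀ a ∈ Gp, ∀ e,
      (Pairs.filter (fun p => e ∈ eL a p)).card = usage (Sym2.map ⇑a⁻¹ e) := by
    intro a ha e
    rw [husage]
    apply Finset.card_nbij' (i := fun p => (a⁻¹ p.1, a⁻¹ p.2)) (j := fun p => (a p.1, a p.2))
    · intro p hp
      rw [Finset.mem_coe, Finset.mem_filter] at hp ⊢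
      exact ⟨(F_pairs_inv a ha p).mp hp.1, (F_eL_iff a ha p e).mp hp.2⟩
    · intro p hp
      rw [Finset.mem_coe, Finset.mem_filter] at hp ⊢
      obtain ⟨hp1, hp2⟩ := hp
      constructor
      · apply (F_pairs_inv a ha (a p.1, a p.2)).mpr
        simpa using hp1
      · rw [F_eL_iff a ha (a p.1, a p.2) e]
        simpa using hp2
    · intro p _; simp
    · intro p _; simp
  have F_mapE : ∀ a ∈ Gp, ∀ e ∈ E, Sym2.map ⇑a e ∈ E := by
    intro a ha e he
    rw [hE, SimpleGraph.mem_edgeFinset] at he ⊢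
    revert he
    refine e.ind ?_
    intro x y he
    rw [Sym2.map_pair_eq]
    exact (G.mem_edgeSet).mpr (hadj' a ha x y ((G.mem_edgeSet).mp he))
  have F_T : ∀ a ∈ Gp, ∑ e ∈ E, usage (Sym2.map ⇑a⁻¹ e) = T := by
    intro a ha
    rw [hT]
    apply Finset.sum_nbij' (i := fun e => Sym2.map ⇑a⁻¹ e) (j := fun e => Sym2.map ⇑a e)
    · intro e he; exact F_mapE a⁻¹ (inv_mem ha) e he
    · intro e he; exact F_mapE a ha e he
    · intro e _; exact sym2_map_map_inv a e
    · intro e _; exact sym2_map_inv_map a e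
    · intro e _; rfl
  have F_nu_const : ∀ e₁ ∈ E, ∀ e₂ ∈ E, ν e₁ = ν e₂ := by
    intro e₁ h₁ e₂ h₂
    obtain ⟨h, hh, hhe⟩ := hedgetrans e₁ h₁ e₂ h₂
    simp only [hν]
    apply Finset.sum_nbij' (i := fun b => h * b) (j := fun a => h⁻¹ * a)
    · intro b hb
      rw [hΓmem] at hb ⊢
      exact mul_mem hh hb
    · intro a ha'
      rw [hΓmem] at ha' ⊢
      exact mul_mem (inv_mem hh) ha'
    · intro b _; simp
    · intro a _; simp
    · intro b _
      congr 1
      rw [← hhe, Sym2.map_map]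
      congr 1
      funext x
      simp
  have F_m_nu : ∀ e ∈ E, m * ν e = Γ.card * T := by
    have hsum : ∑ e' ∈ E, ν e' = Γ.card * T := by
      rw [hν, Finset.sum_comm]
      rw [Finset.sum_congr rfl (fun a ha' => F_T a ((hΓmem a).mp ha'))]
      rw [Finset.sum_const, smul_eq_mul]
    intro e he
    have h2 : ∑ e' ∈ E, ν e' = m * ν e := by
      rw [Finset.sum_congr rfl (fun e' he' => F_nu_const e' he' e he)]
      rw [Finset.sum_const, smul_eq_mul, hm]
    rw [← h2, hsum]
  have F_mu_nu : ∀ e, ∑ p ∈ Pairs, μ p e = ν e := by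
    intro e
    rw [hμ, hν, Finset.sum_comm]
    apply Finset.sum_congr rfl
    intro a ha'
    rw [Finset.sum_boole, Nat.cast_id]
    exact F_count a ((hΓmem a).mp ha') e
  -- congestion and bad pairs as functions of the random shifts
  set cg : ((W × W) → Equiv.Perm W) → Sym2 W → ℕ :=
    fun ω e => (Pairs.filter (fun q => e ∈ eL (ω q) q)).card with hcg
  set Bad : ((W × W) → Equiv.Perm W) → Finset (W × W) :=
    fun ω => Pairs.filter (fun p => ∃ e ∈ eL (ω p) p, t < cg ω e) with hBad
  set D : ((W × W) → Equiv.Perm W) → ℕ :=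
    fun ω => ∑ e ∈ E, ∑ p ∈ Pairs, ∑ q ∈ Pairs.erase p,
      (if e ∈ eL (ω p) p then 1 else 0) * (if e ∈ eL (ω q) q then 1 else 0) with hD
  -- Claim A : pointwise bound on the number of bad pairs
  have claimA : ∀ ω, t * (Bad ω).card ≤ D ω := by
    intro ω
    have hstep : ∀ p ∈ Bad ω, t ≤ ∑ e ∈ E, ∑ q ∈ Pairs.erase p,
        (if e ∈ eL (ω p) p then 1 else 0) * (if e ∈ eL (ω q) q then 1 else 0) := by
      intro p hp
      rw [hBad, Finset.mem_filter] at hp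
      obtain ⟨hpP, e', he', hte'⟩ := hp
      have he'E : e' ∈ E := F_mem _ _ _ he'
      have hinner : t ≤ ∑ q ∈ Pairs.erase p,
          (if e' ∈ eL (ω p) p then 1 else 0) * (if e' ∈ eL (ω q) q then 1 else 0) := by
        have h1 : ∀ q, (if e' ∈ eL (ω p) p then 1 else 0) * (if e' ∈ eL (ω q) q then 1 else 0)
            = (if e' ∈ eL (ω q) q then 1 else 0) := by
          intro q; rw [if_pos he', one_mul]
        rw [Finset.sum_congr rfl (fun q _ => h1 q)]
        rw [Finset.sum_boole, Nat.cast_id]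
        rw [Finset.filter_erase]
        have hpmem : p ∈ Pairs.filter (fun q => e' ∈ eL (ω q) q) :=
          Finset.mem_filter.mpr ⟨hpP, he'⟩
        rw [Finset.card_erase_of_mem hpmem]
        have : t + 1 ≤ (Pairs.filter (fun q => e' ∈ eL (ω q) q)).card := hte'
        omega
      calc t ≤ _ := hinner
        _ ≤ _ := Finset.single_le_sum (f := fun e => ∑ q ∈ Pairs.erase p,
            (if e ∈ eL (ω p) p then 1 else 0) * (if e ∈ eL (ω q) q then 1 else 0))
            (fun e _ => Nat.zero_le _) he'E
    calc t * (Bad ω).card = ∑ _p ∈ Bad ω, t := by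
          rw [Finset.sum_const, smul_eq_mul, mul_comm]
      _ ≤ ∑ p ∈ Bad ω, ∑ e ∈ E, ∑ q ∈ Pairs.erase p,
            (if e ∈ eL (ω p) p then 1 else 0) * (if e ∈ eL (ω q) q then 1 else 0) :=
          Finset.sum_le_sum hstep
      _ ≤ ∑ p ∈ Pairs, ∑ e ∈ E, ∑ q ∈ Pairs.erase p,
            (if e ∈ eL (ω p) p then 1 else 0) * (if e ∈ eL (ω q) q then 1 else 0) :=
          Finset.sum_le_sum_of_subset (by rw [hBad]; exact Finset.filter_subset _ _)
      _ = D ω := by rw [hD, Finset.sum_comm]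
  -- Claim B : expectation bound
  have claimB : ∑ ω ∈ Ω, D ω ≤ Γ.card ^ (n - 2) * ∑ e ∈ E, ν e * ν e := by
    have hswap : ∑ ω ∈ Ω, D ω = ∑ e ∈ E, ∑ p ∈ Pairs, ∑ q ∈ Pairs.erase p, ∑ ω ∈ Ω,
        (if e ∈ eL (ω p) p then 1 else 0) * (if e ∈ eL (ω q) q then 1 else 0) := by
      rw [hD, Finset.sum_comm]
      refine Finset.sum_congr rfl (fun e _ => ?_)
      rw [Finset.sum_comm]
      refine Finset.sum_congr rfl (fun p _ => ?_)
      rw [Finset.sum_comm]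
    have hpoint : ∀ e : Sym2 W, ∀ p ∈ Pairs, ∀ q ∈ Pairs.erase p,
        ∑ ω ∈ Ω, (if e ∈ eL (ω p) p then 1 else 0) * (if e ∈ eL (ω q) q then 1 else 0)
          = Γ.card ^ (n - 2) * (μ p e * μ q e) := by
      intro e p _ q hq
      have hpq : p ≠ q := fun h => (Finset.ne_of_mem_erase hq) h.symm
      rw [hΩ, hn, hμ]
      exact sum_pi_mul Γ hpq (fun a => if e ∈ eL a p then 1 else 0)
        (fun a => if e ∈ eL a q then 1 else 0)
    calc ∑ ω ∈ Ω, D ω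
        = ∑ e ∈ E, ∑ p ∈ Pairs, ∑ q ∈ Pairs.erase p, Γ.card ^ (n - 2) * (μ p e * μ q e) := by
          rw [hswap]
          refine Finset.sum_congr rfl (fun e _ => ?_)
          refine Finset.sum_congr rfl (fun p hp => ?_)
          refine Finset.sum_congr rfl (fun q hq => ?_)
          exact hpoint e p hp q hq
      _ = Γ.card ^ (n - 2) * ∑ e ∈ E, ∑ p ∈ Pairs, ∑ q ∈ Pairs.erase p, μ p e * μ q e := by
          simp_rw [Finset.mul_sum]
      _ ≤ Γ.card ^ (n - 2) * ∑ e ∈ E, ν e * ν e := by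
          apply Nat.mul_le_mul_left
          apply Finset.sum_le_sum
          intro e _
          calc ∑ p ∈ Pairs, ∑ q ∈ Pairs.erase p, μ p e * μ q e
              ≤ ∑ p ∈ Pairs, ∑ q ∈ Pairs, μ p e * μ q e :=
                Finset.sum_le_sum (fun p _ =>
                  Finset.sum_le_sum_of_subset (Finset.erase_subset _ _))
            _ = (∑ p ∈ Pairs, μ p e) * (∑ q ∈ Pairs, μ q e) :=
                (Finset.sum_mul_sum _ _ _ _).symm
            _ = ν e * ν e := by rw [F_mu_nu e]
  -- combine
  have hqsum : m * ∑ e ∈ E, ν e * ν e = Γ.card * T * (Γ.card * T) := by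
    apply Nat.eq_of_mul_eq_mul_left hmpos
    calc m * (m * ∑ e ∈ E, ν e * ν e)
        = ∑ e ∈ E, (m * ν e) * (m * ν e) := by
          rw [Finset.mul_sum, Finset.mul_sum]
          refine Finset.sum_congr rfl (fun e _ => ?_)
          ring
      _ = ∑ _e ∈ E, (Γ.card * T) * (Γ.card * T) := by
          refine Finset.sum_congr rfl (fun e he => ?_)
          rw [F_m_nu e he]
      _ = m * (Γ.card * T * (Γ.card * T)) := by
          rw [Finset.sum_const, smul_eq_mul, hm]
  have hgrand : ∑ ω ∈ Ω, (m * t * (Bad ω).card) ≤ ∑ ω ∈ Ω, T * T := by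
    have h1 : m * ∑ ω ∈ Ω, t * (Bad ω).card ≤ m * ∑ ω ∈ Ω, D ω :=
      Nat.mul_le_mul_left m (Finset.sum_le_sum (fun ω _ => claimA ω))
    have h2 : m * ∑ ω ∈ Ω, D ω ≤ Γ.card ^ (n - 2) * (m * ∑ e ∈ E, ν e * ν e) := by
      calc m * ∑ ω ∈ Ω, D ω ≤ m * (Γ.card ^ (n - 2) * ∑ e ∈ E, ν e * ν e) :=
            Nat.mul_le_mul_left m claimB
        _ = Γ.card ^ (n - 2) * (m * ∑ e ∈ E, ν e * ν e) := by ring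
    have h3 : Γ.card ^ (n - 2) * (m * ∑ e ∈ E, ν e * ν e) = Γ.card ^ n * (T * T) := by
      rw [hqsum]
      have : Γ.card ^ (n - 2) * (Γ.card * T * (Γ.card * T))
          = Γ.card ^ (n - 2) * Γ.card ^ 2 * (T * T) := by ring
      rw [this, ← pow_add, Nat.sub_add_cancel hn2]
    calc ∑ ω ∈ Ω, (m * t * (Bad ω).card)
        = m * ∑ ω ∈ Ω, t * (Bad ω).card := by
          rw [Finset.mul_sum]
          refine Finset.sum_congr rfl (fun ω _ => ?_)
          ring
      _ ≤ Γ.card ^ n * (T * T) := le_trans (le_trans h1 h2) (le_of_eq h3)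
      _ = Ω.card * (T * T) := by rw [hΩcard]
      _ = ∑ _ω ∈ Ω, T * T := by rw [Finset.sum_const, smul_eq_mul]
  obtain ⟨ω₀, hω₀Ω, hω₀⟩ := Finset.exists_le_of_sum_le hΩne hgrand
  have hω₀Gp : ∀ p : W × W, ω₀ p ∈ Gp := by
    intro p
    rw [hΩ] at hω₀Ω
    exact (hΓmem _).mp (Fintype.mem_piFinset.mp hω₀Ω p)
  -- the deleted edges and the path family
  set Eb : Finset (Sym2 W) := E.filter (fun e => t < cg ω₀ e) with hEb
  set A : ∀ u v : W, Option (G.Walk u v) :=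
    fun u v => oneWalk Gp hadj' B (ω₀ (u, v)) u v with hA
  have hAeq : ∀ p : W × W, A p.1 p.2 = oneWalk Gp hadj' B (ω₀ p) p.1 p.2 := by
    intro p; rw [hA]
  -- total usage bound : t * |Eb| ≤ Pc * ℓ  and  T ≤ Pc * ℓ
  have husum : ∀ (f : (W × W) → List (Sym2 W)), (∀ p ∈ Pairs, (f p).length ≤ ℓ) →
      ∑ e ∈ E, (Pairs.filter (fun p => e ∈ f p)).card ≤ Pc * ℓ := by
    intro f hf
    calc ∑ e ∈ E, (Pairs.filter (fun p => e ∈ f p)).card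
        = ∑ e ∈ E, ∑ p ∈ Pairs, (if e ∈ f p then 1 else 0) := by
          refine Finset.sum_congr rfl (fun e _ => ?_)
          rw [Finset.sum_boole, Nat.cast_id]
      _ = ∑ p ∈ Pairs, ∑ e ∈ E, (if e ∈ f p then 1 else 0) := Finset.sum_comm
      _ = ∑ p ∈ Pairs, (E.filter (fun e => e ∈ f p)).card := by
          refine Finset.sum_congr rfl (fun p _ => ?_)
          rw [Finset.sum_boole, Nat.cast_id]
      _ ≤ ∑ p ∈ Pairs, ℓ := by
          apply Finset.sum_le_sum
          intro p hp
          have hsub : E.filter (fun e => e ∈ f p) ⊆ (f p).toFinset := by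
            intro e he
            exact List.mem_toFinset.mpr (Finset.mem_filter.mp he).2
          calc (E.filter (fun e => e ∈ f p)).card ≤ (f p).toFinset.card :=
                Finset.card_le_card hsub
            _ ≤ (f p).length := (f p).toFinset_card_le
            _ ≤ ℓ := hf p hp
      _ = Pc * ℓ := by rw [Finset.sum_const, smul_eq_mul, hPc]
  have hEbcard : t * Eb.card ≤ Pc * ℓ := by
    calc t * Eb.card = ∑ _e ∈ Eb, t := by rw [Finset.sum_const, smul_eq_mul, mul_comm]
      _ ≤ ∑ e ∈ Eb, cg ω₀ e :=
          Finset.sum_le_sum (fun e he => le_of_lt (Finset.mem_filter.mp he).2)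
      _ ≤ ∑ e ∈ E, cg ω₀ e :=
          Finset.sum_le_sum_of_subset (Finset.filter_subset _ _)
      _ ≤ Pc * ℓ := husum (fun p => eL (ω₀ p) p) (fun p hp => F_len (ω₀ p) (hω₀Gp p) p hp)
  have hTle : T ≤ Pc * ℓ := by
    rw [hT]
    exact husum bL F_blen
  -- real casts
  have htR : (0:ℝ) < t := by exact_mod_cast ht0
  have hmR : (0:ℝ) < m := by exact_mod_cast hmpos
  refine ⟨Eb, ?_, ?_, finalP A ℓ Eb, ?_, ?_, ?_⟩
  · rw [hEb, hE]; exact Finset.filter_subset _ _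
  · -- |Eb| bound
    rw [le_div_iff₀ htR]
    have h1 : ((t * Eb.card : ℕ) : ℝ) ≤ ((Pc * ℓ : ℕ) : ℝ) := by exact_mod_cast hEbcard
    have h2 : (Pc : ℝ) = (SA.card : ℝ) * SB.card := by exact_mod_cast hPcc
    push_cast at h1
    rw [h2] at h1
    linarith
  · -- property of output paths
    intro u _ v _ w hw
    obtain ⟨_, h2, h3⟩ := finalP_eq_some hw
    exact ⟨h2, h3⟩
  · -- congestion
    intro e
    by_cases hne : (Pairs.filter (fun uv =>
        ∃ wlk : G.Walk uv.1 uv.2, finalP A ℓ Eb uv.1 uv.2 = some wlk ∧ e ∈ wlk.edges)).Nonempty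
    · obtain ⟨uv, huv⟩ := hne
      rw [Finset.mem_filter] at huv
      obtain ⟨huvP, w, hPw, hew⟩ := huv
      obtain ⟨hAw, hlw, havoid⟩ := finalP_eq_some hPw
      have heE : e ∈ E := by
        rw [hE, SimpleGraph.mem_edgeFinset]
        exact w.edges_subset_edgeSet hew
      have heb : e ∉ Eb := havoid e hew
      have hcge : cg ω₀ e ≤ t := by
        by_contra hcon
        push_neg at hcon
        exact heb (by rw [hEb]; exact Finset.mem_filter.mpr ⟨heE, hcon⟩)
      have hsub : Pairs.filter (fun uv => ∃ wlk : G.Walk uv.1 uv.2,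
          finalP A ℓ Eb uv.1 uv.2 = some wlk ∧ e ∈ wlk.edges)
          ⊆ Pairs.filter (fun q => e ∈ eL (ω₀ q) q) := by
        intro q hq
        rw [Finset.mem_filter] at hq ⊢
        obtain ⟨hqP, w', hPw', hew'⟩ := hq
        refine ⟨hqP, ?_⟩
        obtain ⟨hAw', -, -⟩ := finalP_eq_some hPw'
        have hone : oneWalk Gp hadj' B (ω₀ q) q.1 q.2 = some w' := by
          rw [← hAeq q]
          exact hAw'
        rw [heL]
        simp only [hone, wEdges_some]
        exact hew'
      simp only [hcg] at hcge
      exact_mod_cast le_trans (Finset.card_le_card hsub) hcge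
    · rw [Finset.not_nonempty_iff_eq_empty] at hne
      rw [hne]
      simp
  · -- fraction of invalid pairs
    have hkey : Pairs.filter (fun uv => finalP A ℓ Eb uv.1 uv.2 = none) = Bad ω₀ := by
      rw [hBad]
      apply Finset.filter_congr
      intro p hp
      obtain ⟨w, hw, hlw⟩ := F_one (ω₀ p) (hω₀Gp p) p hp
      have hAp : A p.1 p.2 = some w := by rw [hAeq p]; exact hw
      rw [finalP_eq_none_iff hAp hlw]
      have hedges : w.edges = eL (ω₀ p) p := by
        rw [heL]
        simp only [hw, wEdges_some]
      rw [hedges, hEb]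
      constructor
      · rintro ⟨e, he, hb⟩
        exact ⟨e, he, (Finset.mem_filter.mp hb).2⟩
      · rintro ⟨e, he, hlt⟩
        exact ⟨e, he, Finset.mem_filter.mpr ⟨F_mem _ _ _ he, hlt⟩⟩
    rw [hkey]
    have hb1 : (m : ℝ) * t * ((Bad ω₀).card : ℝ) ≤ (T : ℝ) * T := by exact_mod_cast hω₀
    have hb2 : (T : ℝ) ≤ ((SA.card : ℝ) * SB.card) * ℓ := by
      have h0 : (T:ℝ) ≤ ((Pc * ℓ : ℕ):ℝ) := by exact_mod_cast hTle
      push_cast at h0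
      have h2 : (Pc : ℝ) = (SA.card : ℝ) * SB.card := by exact_mod_cast hPcc
      rw [h2] at h0
      linarith
    have hTnn : (0:ℝ) ≤ T := Nat.cast_nonneg _
    have hmE : (m:ℝ) = (G.edgeFinset.card : ℝ) := by rw [hm, hE]
    have hb3 : (T:ℝ) * T ≤ (((SA.card : ℝ) * SB.card) * ℓ) * (ε^2 * t * m) := by
      apply mul_le_mul hb2 _ hTnn (by positivity)
      exact le_trans hb2 (by rw [hmE]; exact ht)
    have h4 : ((Bad ω₀).card : ℝ) * ((m:ℝ)*t) = (m:ℝ)*t*((Bad ω₀).card) := by ring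
    have h5 : (((SA.card:ℝ)*SB.card)*ℓ) * (ε^2*t*m) = (((SA.card:ℝ)*SB.card)*ℓ*ε^2)*((m:ℝ)*t) := by
      ring
    have hbound : ((Bad ω₀).card : ℝ) * ((m:ℝ) * t)
        ≤ (((SA.card:ℝ) * SB.card) * ℓ * ε^2) * ((m:ℝ) * t) := by
      rw [h4]
      exact le_trans hb1 (by rw [← h5]; exact hb3)
    have h6 : ((Bad ω₀).card : ℝ) ≤ ((SA.card:ℝ)*SB.card)*ℓ*ε^2 :=
      le_of_mul_le_mul_right hbound (mul_pos hmR htR)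
    calc ((Bad ω₀).card : ℝ) ≤ ((SA.card:ℝ)*SB.card)*ℓ*ε^2 := h6
      _ = (((SA.card:ℝ)*SB.card)*ε) * ((ℓ:ℝ)*ε) := by ring
      _ ≤ (((SA.card:ℝ)*SB.card)*ε) * 1 :=
          mul_le_mul_of_nonneg_left hℓε
            (mul_nonneg (mul_nonneg (Nat.cast_nonneg _) (Nat.cast_nonneg _)) (le_of_lt hε))
      _ = 1 * ε * ((SA.card:ℝ) * SB.card) := by ring
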